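/- Let Y be a real topological vector space, A ⊆ Y and k ∈ Y \ {0}. Then cl(A) − {t·k : t > 0} ⊆ A holds if and only if k ∈ −0⁺A and cl_k(A) = cl(A). -/

import Mathlib

open Pointwise

/-- The `k`-directional closure of a set `A`. -/
def dirCl {Y : Type*} [AddCommGroup Y] [Module ℝ Y] (A : Set Y) (k : Y) : Set Y :=
  {y | ∀ l : ℝ, 0 < l → ∃ t : ℝ, 0 ≤ t ∧ t < l ∧ y - t • k ∈ A}

/-- The recession cone `0⁺A` of a set `A`. -/
def recCone {Y : Type*} [AddCommGroup Y] [Module ℝ Y] (A : Set Y) : Set Y :=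
  {u | ∀ a ∈ A, ∀ t : ℝ, 0 ≤ t → a + t • u ∈ A}

theorem closure_sub_subset_iff {Y : Type*} [AddCommGroup Y] [Module ℝ Y] [TopologicalSpace Y]
    [IsTopologicalAddGroup Y] [ContinuousSMul ℝ Y] (A : Set Y) (k : Y) (hk : k ≠ 0) :
    closure A - {x : Y | ∃ t : ℝ, 0 < t ∧ x = t • k} ⊆ A ↔
      (-k ∈ recCone A ∧ dirCl A k = closure A) := by
  constructor
  · intro H
    have key : ∀ y ∈ closure A, ∀ t : ℝ, 0 < t → y - t • k ∈ A := by
      intro y hy t ht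
      exact H (Set.sub_mem_sub hy ⟨t, ht, rfl⟩)
    constructor
    · intro a ha t ht
      rcases eq_or_lt_of_le ht with h | h
      · simpa [← h] using ha
      · have := key a (subset_closure ha) t h
        simpa [smul_neg, sub_eq_add_neg] using this
    · apply Set.Subset.antisymm
      · intro y hy
        rw [mem_closure_iff_nhds]
        intro U hU
        have htend : Filter.Tendsto (fun t : ℝ => y - t • k) (nhds 0) (nhds y) := by
          have : Filter.Tendsto (fun t : ℝ => t • k) (nhds 0) (nhds ((0 : ℝ) • k)) :=
            (continuous_id.smul continuous_const).tendsto 0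
          simpa using Filter.Tendsto.sub tendsto_const_nhds this
        have hV : (fun t : ℝ => y - t • k) ⁻¹' U ∈ nhds (0 : ℝ) := htend hU
        rcases Metric.mem_nhds_iff.mp hV with ⟨ε, hε, hball⟩
        rcases hy ε hε with ⟨t, ht0, htε, htA⟩
        refine ⟨y - t • k, hball ?_, htA⟩
        simp [Real.dist_eq, abs_lt]
        constructor <;> [linarith; exact lt_of_le_of_lt (le_abs_self t) (by rwa [abs_of_nonneg ht0])]
      · intro y hy l hl
        exact ⟨l / 2, by positivity, by linarith, key y hy (l / 2) (by positivity)⟩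
  · rintro ⟨hrec, hdir⟩ x hx
    rw [Set.mem_sub] at hx
    rcases hx with ⟨y, hy, z, ⟨t, ht, rfl⟩, rfl⟩
    rw [← hdir] at hy
    rcases hy t ht with ⟨s, hs0, hst, hsA⟩
    have := hrec _ hsA (t - s) (by linarith)
    have heq : y - s • k + (t - s) • (-k) = y - t • k := by
      rw [smul_neg, sub_smul]
      abel
    rwa [heq] at this
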